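/- Let 𝔽 = 𝔽₅. Let x ↦ Q_x be a linear map from 𝔽ⁿ to the space of homogeneous quadratic forms on 𝔽^N. Suppose (x₁,x₂,x₃,x₄) ∈ (𝔽ⁿ)⁴ satisfies x₁+x₂ = x₃+x₄ and is 'good', meaning V_{x_i} ∩ (V_{x_j} + V_{x_k}) = {0} for all distinct i,j,k ∈ {1,2,3,4}, where V_x is the minimal subspace such that Q_x(y) depends only on the inner products ⟨v,y⟩ for v ∈ V_x. Then Q_{x₁} = 0. -/

import Mathlib

open Matrix LinearMap Module

variable {F : Type*} [Field F] {N : ℕ}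

/-- The standard dot-product bilinear form on `Fin N → F`. -/
def dotB (F : Type*) [Field F] (N : ℕ) : LinearMap.BilinForm F (Fin N → F) :=
  LinearMap.mk₂ F (fun x y => x ⬝ᵥ y)
    (fun x x' y => add_dotProduct x x' y)
    (fun a x y => smul_dotProduct a x y)
    (fun x y y' => dotProduct_add x y y')
    (fun a x y => dotProduct_smul a x y)

lemma dotB_apply (x y : Fin N → F) : dotB F N x y = x ⬝ᵥ y := rfl

lemma dotB_refl : (dotB F N).IsRefl := by
  intro x y h
  rwa [dotB_apply, dotProduct_comm] at h

lemma dotB_nondegenerate : (dotB F N).Nondegenerate := by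
  refine ⟨?_, ?_⟩ <;> intro x h <;> funext i
  · simpa [dotB_apply, dotProduct_single] using h (Pi.single i 1)
  · simpa [dotB_apply, single_dotProduct] using h (Pi.single i 1)

/-- For a symmetric matrix, the kernel of `mulVecLin` is the orthogonal complement of
its range with respect to the dot product. -/
lemma ker_eq_orthogonal_range (A : Matrix (Fin N) (Fin N) F) (hA : A.IsSymm) :
    LinearMap.ker A.mulVecLin = (dotB F N).orthogonal (LinearMap.range A.mulVecLin) := by
  have key : ∀ x y : Fin N → F, dotB F N (A.mulVec x) y = (A.mulVec y) ⬝ᵥ x := by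
    intro x y
    rw [dotB_apply, dotProduct_comm, Matrix.dotProduct_mulVec,
      ← Matrix.mulVec_transpose, hA.eq, dotProduct_comm]
  ext y
  constructor
  · intro hy
    rintro _ ⟨x, rfl⟩
    have hy' : A.mulVec y = 0 := hy
    show dotB F N (A.mulVec x) y = 0
    rw [key, hy', zero_dotProduct]
  · intro hy
    show A.mulVec y = 0
    funext i
    have := hy (A.mulVec (Pi.single i 1)) ⟨Pi.single i 1, rfl⟩
    rw [key,
      dotProduct_single, mul_one] at this
    exact this

lemma orthogonal_sup (U W : Submodule F (Fin N → F)) :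
    (dotB F N).orthogonal (U ⊔ W) = (dotB F N).orthogonal U ⊓ (dotB F N).orthogonal W := by
  ext m
  constructor
  · intro h
    exact ⟨fun u hu => h u (Submodule.mem_sup_left hu),
           fun w hw => h w (Submodule.mem_sup_right hw)⟩
  · rintro ⟨h1, h2⟩ v hv
    rcases Submodule.mem_sup.mp hv with ⟨u, hu, w, hw, rfl⟩
    show dotB F N (u + w) m = 0
    rw [map_add, LinearMap.add_apply]
    rw [show dotB F N u m = 0 from h1 u hu, show dotB F N w m = 0 from h2 w hw, add_zero]

/-- Key lemma: for symmetric matrices with trivially intersecting ranges, the range of the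
sum is the sup of the ranges. -/
lemma range_add_eq (A B : Matrix (Fin N) (Fin N) F) (hA : A.IsSymm) (hB : B.IsSymm)
    (h : LinearMap.range A.mulVecLin ⊓ LinearMap.range B.mulVecLin = ⊥) :
    LinearMap.range (A + B).mulVecLin
      = LinearMap.range A.mulVecLin ⊔ LinearMap.range B.mulVecLin := by
  have hle : LinearMap.range (A + B).mulVecLin
      ≤ LinearMap.range A.mulVecLin ⊔ LinearMap.range B.mulVecLin := by
    rintro _ ⟨y, rfl⟩
    have : (A + B).mulVecLin y = A.mulVecLin y + B.mulVecLin y := by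
      simp [Matrix.mulVecLin, Matrix.add_mulVec]
    rw [this]
    exact Submodule.add_mem_sup ⟨y, rfl⟩ ⟨y, rfl⟩
  have hker : LinearMap.ker (A + B).mulVecLin
      = LinearMap.ker A.mulVecLin ⊓ LinearMap.ker B.mulVecLin := by
    ext y
    simp only [LinearMap.mem_ker, Submodule.mem_inf]
    constructor
    · intro hy
      have h1 : A.mulVecLin y + B.mulVecLin y = 0 := by
        rw [← hy]; simp [Matrix.mulVecLin, Matrix.add_mulVec]
      have h2 : A.mulVecLin y = -(B.mulVecLin y) := by linear_combination h1
      have h3 : A.mulVecLin y ∈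
          LinearMap.range A.mulVecLin ⊓ LinearMap.range B.mulVecLin := by
        refine ⟨⟨y, rfl⟩, ?_⟩
        rw [h2]
        exact Submodule.neg_mem _ ⟨y, rfl⟩
      rw [h] at h3
      have h4 : A.mulVecLin y = 0 := h3
      refine ⟨h4, ?_⟩
      have := h2
      rw [h4] at this
      exact (neg_eq_zero.mp this.symm)
    · rintro ⟨h1, h2⟩
      show (A + B).mulVec y = 0
      rw [Matrix.add_mulVec]
      have h1' : A.mulVec y = 0 := h1
      have h2' : B.mulVec y = 0 := h2
      rw [h1', h2', add_zero]
  -- kernel = orthogonal of the sup of ranges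
  have hker2 : LinearMap.ker (A + B).mulVecLin
      = (dotB F N).orthogonal
          (LinearMap.range A.mulVecLin ⊔ LinearMap.range B.mulVecLin) := by
    rw [hker, ker_eq_orthogonal_range A hA, ker_eq_orthogonal_range B hB, orthogonal_sup]
  -- now compare finranks
  have hsup_le : finrank F ↥(LinearMap.range A.mulVecLin ⊔ LinearMap.range B.mulVecLin)
      ≤ finrank F (Fin N → F) := Submodule.finrank_le _
  have hdim : finrank F ↥(LinearMap.range (A + B).mulVecLin)
      = finrank F ↥(LinearMap.range A.mulVecLin ⊔ LinearMap.range B.mulVecLin) := by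
    have h1 := LinearMap.finrank_range_add_finrank_ker (A + B).mulVecLin
    rw [hker2, LinearMap.BilinForm.finrank_orthogonal dotB_nondegenerate] at h1
    omega
  exact Submodule.eq_of_le_of_finrank_le hle hdim.symm.le

/-- a good additive quadruple forces vanishing of the quadratic form. -/
theorem stmt11 (n N : ℕ)
    (Q : (Fin n → ZMod 5) →ₗ[ZMod 5] Matrix (Fin N) (Fin N) (ZMod 5))
    (hsymm : ∀ x, (Q x).IsSymm)
    (X : Fin 4 → (Fin n → ZMod 5))
    (hadd : X 0 + X 1 = X 2 + X 3)
    (hgood : ∀ i j k : Fin 4, i ≠ j → i ≠ k → j ≠ k →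
      LinearMap.range (Q (X i)).mulVecLin ⊓
        (LinearMap.range (Q (X j)).mulVecLin ⊔ LinearMap.range (Q (X k)).mulVecLin) = ⊥) :
    Q (X 0) = 0 := by
  haveI : Fact (Nat.Prime 5) := ⟨by norm_num⟩
  have hQadd : Q (X 0) + Q (X 1) = Q (X 2) + Q (X 3) := by
    rw [← map_add, ← map_add, hadd]
  have h01 : LinearMap.range (Q (X 0)).mulVecLin ⊓ LinearMap.range (Q (X 1)).mulVecLin = ⊥ := by
    rw [← le_bot_iff, ← hgood 0 1 2 (by decide) (by decide) (by decide)]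
    exact inf_le_inf_left _ le_sup_left
  have h23 : LinearMap.range (Q (X 2)).mulVecLin ⊓ LinearMap.range (Q (X 3)).mulVecLin = ⊥ := by
    rw [← le_bot_iff, ← hgood 2 3 0 (by decide) (by decide) (by decide)]
    exact inf_le_inf_left _ le_sup_left
  have key : LinearMap.range (Q (X 0)).mulVecLin ⊔ LinearMap.range (Q (X 1)).mulVecLin
      = LinearMap.range (Q (X 2)).mulVecLin ⊔ LinearMap.range (Q (X 3)).mulVecLin := by
    rw [← range_add_eq _ _ (hsymm (X 0)) (hsymm (X 1)) h01,
      ← range_add_eq _ _ (hsymm (X 2)) (hsymm (X 3)) h23, hQadd]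
  have h0 : LinearMap.range (Q (X 0)).mulVecLin = ⊥ := by
    rw [← le_bot_iff, ← hgood 0 2 3 (by decide) (by decide) (by decide)]
    refine le_inf le_rfl ?_
    rw [← key]
    exact le_sup_left
  have hlin : (Q (X 0)).mulVecLin = 0 := LinearMap.range_eq_bot.mp h0
  ext i j
  have hcol : (Q (X 0)).mulVec (Pi.single j 1) = 0 := by
    have := LinearMap.congr_fun hlin (Pi.single j 1)
    simpa using this
  have := congrFun hcol i
  rw [Matrix.mulVec_single] at this
  simpa using this
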